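/- arXiv:1809.05429 — 2 statements merged into one kernel-verified Lean document; each statement's English description precedes it below -/
import Mathlib

section
/- Let n ≥ 3 be odd. If a and b are two elements generating the dicyclic group G_n of order 4n, then the multiset of orders {orderOf a, orderOf b, orderOf (a*b)} is equal either to the multiset {4, 4, 2n} or to the multiset {4, 4, n}. -/
private lemma QG.mem_zmul {m : ℕ} {d c : ℕ} (h : d ∣ c) :
    ((c : ℕ) : ZMod m) ∈ AddSubgroup.zmultiples ((d : ℕ) : ZMod m) := by
  obtain ⟨e, rfl⟩ := h
  refine AddSubgroup.mem_zmultiples_iff.mpr ⟨(e : ℤ), ?_⟩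
  push_cast [zsmul_eq_mul]
  ring

private lemma QG.mem_zmul' {m : ℕ} [NeZero m] {d : ℕ} {x : ZMod m} (h : d ∣ x.val) :
    x ∈ AddSubgroup.zmultiples ((d : ℕ) : ZMod m) := by
  have := QG.mem_zmul (m := m) h
  rwa [ZMod.natCast_val, ZMod.cast_id] at this

/-- The subgroup of `QuaternionGroup n` consisting of `{a k | k ∈ ⟨d⟩} ∪ {xa k | k - i ∈ ⟨d⟩}`,
for `d ∣ n`. -/
private def QG.K (n d : ℕ) (hd : d ∣ n) (i : ZMod (2*n)) : Subgroup (QuaternionGroup n) where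
  carrier := {x | match x with
    | .a k => k ∈ AddSubgroup.zmultiples ((d : ℕ) : ZMod (2*n))
    | .xa k => k - i ∈ AddSubgroup.zmultiples ((d : ℕ) : ZMod (2*n))}
  one_mem' := by
    show (0 : ZMod (2*n)) ∈ AddSubgroup.zmultiples ((d : ℕ) : ZMod (2*n))
    exact zero_mem _
  mul_mem' := by
    have hn : ((n : ℕ) : ZMod (2*n)) ∈ AddSubgroup.zmultiples ((d : ℕ) : ZMod (2*n)) :=
      QG.mem_zmul hd
    rintro (k | k) (l | l) hx hy
    · show k + l ∈ AddSubgroup.zmultiples ((d : ℕ) : ZMod (2*n))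
      exact add_mem hx hy
    · show (l - k) - i ∈ AddSubgroup.zmultiples ((d : ℕ) : ZMod (2*n))
      have h : (l - k) - i = (l - i) - k := by ring
      rw [h]; exact sub_mem hy hx
    · show (k + l) - i ∈ AddSubgroup.zmultiples ((d : ℕ) : ZMod (2*n))
      have h : (k + l) - i = (k - i) + l := by ring
      rw [h]; exact add_mem hx hy
    · show ((n : ZMod (2*n)) + l - k) ∈ AddSubgroup.zmultiples ((d : ℕ) : ZMod (2*n))
      have h : (n : ZMod (2*n)) + l - k = (n : ZMod (2*n)) + (l - i) - (k - i) := by ring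
      rw [h]; exact sub_mem (add_mem hn hy) hx
  inv_mem' := by
    have hn : ((n : ℕ) : ZMod (2*n)) ∈ AddSubgroup.zmultiples ((d : ℕ) : ZMod (2*n)) :=
      QG.mem_zmul hd
    rintro (k | k) hx
    · show -k ∈ AddSubgroup.zmultiples ((d : ℕ) : ZMod (2*n))
      exact neg_mem hx
    · show ((n : ZMod (2*n)) + k) - i ∈ AddSubgroup.zmultiples ((d : ℕ) : ZMod (2*n))
      have h : (n : ZMod (2*n)) + k - i = (n : ZMod (2*n)) + (k - i) := by ring
      rw [h]; exact add_mem hn hx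

private lemma QG.a_mem_K {n d : ℕ} (hd : d ∣ n) (i k : ZMod (2*n)) :
    QuaternionGroup.a k ∈ QG.K n d hd i ↔
      k ∈ AddSubgroup.zmultiples ((d : ℕ) : ZMod (2*n)) := Iff.rfl

private lemma QG.xa_mem_K {n d : ℕ} (hd : d ∣ n) (i k : ZMod (2*n)) :
    QuaternionGroup.xa k ∈ QG.K n d hd i ↔
      k - i ∈ AddSubgroup.zmultiples ((d : ℕ) : ZMod (2*n)) := Iff.rfl

/-- If `K n d hd i` is everything then `d = 1`. -/
private lemma QG.K_ne_top {n d : ℕ} (hn : 3 ≤ n) (hd : d ∣ n) (i : ZMod (2*n))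
    (hK : QG.K n d hd i = ⊤) : d = 1 := by
  have h1 : QuaternionGroup.a (1 : ZMod (2*n)) ∈ QG.K n d hd i := by rw [hK]; trivial
  rw [QG.a_mem_K, AddSubgroup.mem_zmultiples_iff] at h1
  obtain ⟨m, hm⟩ := h1
  rw [zsmul_eq_mul] at hm
  have hd1 : (d : ℤ) ∣ 1 := by
    have h2n : ((2 * n : ℕ) : ℤ) ∣ (m * d - 1) := by
      have : ((m * d - 1 : ℤ) : ZMod (2*n)) = 0 := by push_cast [hm]; ring
      exact (ZMod.intCast_zmod_eq_zero_iff_dvd _ _).mp this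
    have hdn : (d : ℤ) ∣ ((2 * n : ℕ) : ℤ) := by
      exact_mod_cast Int.natCast_dvd_natCast.mpr (hd.mul_left 2)
    have h3 := hdn.trans h2n
    have h4 : (d : ℤ) ∣ m * d := ⟨m, mul_comm _ _⟩
    simpa using dvd_sub h4 h3
  exact_mod_cast Int.eq_one_of_dvd_one (by positivity) hd1

private lemma QG.orderOf_a_of_coprime {n : ℕ} (hn : 3 ≤ n) (j : ZMod (2*n))
    (h : Nat.gcd n j.val = 1) :
    orderOf (QuaternionGroup.a j) = 2 * n ∨ orderOf (QuaternionGroup.a j) = n := by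
  haveI : NeZero n := ⟨by omega⟩
  rw [QuaternionGroup.orderOf_a]
  set g := Nat.gcd (2 * n) j.val with hg
  have h1 : g ∣ j.val := Nat.gcd_dvd_right _ _
  have hco : Nat.Coprime g n :=
    Nat.Coprime.coprime_dvd_left h1 (Nat.coprime_comm.mp h)
  have hg2 : g ∣ 2 := hco.dvd_of_dvd_mul_right (Nat.gcd_dvd_left _ _)
  rcases (Nat.dvd_prime Nat.prime_two).mp hg2 with h1 | h2
  · left; rw [h1]; omega
  · right; rw [h2]; omega

/-- Given generation by `xa i` and `a j`, `gcd n j.val = 1`. -/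
private lemma QG.gcd_eq_one {n : ℕ} (hn : 3 ≤ n) (i j : ZMod (2*n))
    (hgen : Subgroup.closure ({QuaternionGroup.xa i, QuaternionGroup.a j} :
      Set (QuaternionGroup n)) = ⊤) :
    Nat.gcd n j.val = 1 := by
  haveI : NeZero n := ⟨by omega⟩
  set d := Nat.gcd n j.val with hdd
  have hd : d ∣ n := Nat.gcd_dvd_left _ _
  refine QG.K_ne_top hn hd i ?_
  rw [eq_top_iff, ← hgen]
  refine Subgroup.closure_le _ |>.mpr ?_
  rintro x (rfl | rfl)
  · rw [SetLike.mem_coe, QG.xa_mem_K, sub_self]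
    exact zero_mem _
  · rw [SetLike.mem_coe, QG.a_mem_K]
    exact QG.mem_zmul' (Nat.gcd_dvd_right _ _)

/-- Given generation by `xa i` and `xa k`, `gcd n (n + k - i).val = 1`. -/
private lemma QG.gcd_eq_one' {n : ℕ} (hn : 3 ≤ n) (i k : ZMod (2*n))
    (hgen : Subgroup.closure ({QuaternionGroup.xa i, QuaternionGroup.xa k} :
      Set (QuaternionGroup n)) = ⊤) :
    Nat.gcd n ((n : ZMod (2*n)) + k - i).val = 1 := by
  haveI : NeZero n := ⟨by omega⟩
  set d := Nat.gcd n ((n : ZMod (2*n)) + k - i).val with hdd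
  have hd : d ∣ n := Nat.gcd_dvd_left _ _
  have hnA : ((n : ℕ) : ZMod (2*n)) ∈ AddSubgroup.zmultiples ((d : ℕ) : ZMod (2*n)) :=
    QG.mem_zmul hd
  have hsA : ((n : ZMod (2*n)) + k - i) ∈ AddSubgroup.zmultiples ((d : ℕ) : ZMod (2*n)) :=
    QG.mem_zmul' (Nat.gcd_dvd_right _ _)
  refine QG.K_ne_top hn hd i ?_
  rw [eq_top_iff, ← hgen]
  refine Subgroup.closure_le _ |>.mpr ?_
  rintro x (rfl | rfl)
  · rw [SetLike.mem_coe, QG.xa_mem_K, sub_self]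
    exact zero_mem _
  · rw [SetLike.mem_coe, QG.xa_mem_K]
    have h : k - i = ((n : ZMod (2*n)) + k - i) - (n : ZMod (2*n)) := by ring
    rw [h]; exact sub_mem hsA hnA

/-- The subgroup of `a`-elements. -/
private def QG.aSub (n : ℕ) : Subgroup (QuaternionGroup n) where
  carrier := Set.range QuaternionGroup.a
  one_mem' := ⟨0, rfl⟩
  mul_mem' := by rintro _ _ ⟨k, rfl⟩ ⟨l, rfl⟩; exact ⟨k + l, rfl⟩
  inv_mem' := by rintro _ ⟨k, rfl⟩; exact ⟨-k, rfl⟩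

private lemma QG.multiset_rot (x y : ℕ) : ({x, y, y} : Multiset ℕ) = {y, y, x} := by
  show x ::ₘ y ::ₘ y ::ₘ 0 = y ::ₘ y ::ₘ x ::ₘ 0
  rw [Multiset.cons_swap x y, Multiset.cons_swap x y]

private lemma QG.multiset_mid (x y : ℕ) : ({y, x, y} : Multiset ℕ) = {y, y, x} := by
  show y ::ₘ x ::ₘ y ::ₘ 0 = y ::ₘ y ::ₘ x ::ₘ 0
  rw [Multiset.cons_swap x y]

/-- For `n ≥ 3` odd, every generating pair `(a, b)` of the dicyclic group `G_n`
(of order `4n`, Mathlib's `QuaternionGroup n`) has order-multiset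
`{orderOf a, orderOf b, orderOf (a*b)}` equal to `{4, 4, 2n}` or to `{4, 4, n}`. -/
theorem dicyclic_generating_pair_orders_of_odd (n : ℕ) (hn : 3 ≤ n) (hnodd : Odd n)
    (a b : QuaternionGroup n)
    (hgen : Subgroup.closure ({a, b} : Set (QuaternionGroup n)) = ⊤) :
    ({orderOf a, orderOf b, orderOf (a * b)} : Multiset ℕ) = ({4, 4, 2 * n} : Multiset ℕ) ∨
    ({orderOf a, orderOf b, orderOf (a * b)} : Multiset ℕ) = ({4, 4, n} : Multiset ℕ) := by
  haveI : NeZero n := ⟨by omega⟩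
  rcases a with i | i <;> rcases b with j | j
  · -- both `a _`: not generating
    exfalso
    have hle : Subgroup.closure ({QuaternionGroup.a i, QuaternionGroup.a j} :
        Set (QuaternionGroup n)) ≤ QG.aSub n := by
      refine Subgroup.closure_le _ |>.mpr ?_
      rintro x (rfl | rfl)
      exacts [⟨i, rfl⟩, ⟨j, rfl⟩]
    rw [hgen] at hle
    have : QuaternionGroup.xa 0 ∈ QG.aSub n := hle trivial
    obtain ⟨k, hk⟩ := this
    cases hk
  · -- a = a i, b = xa j
    have hpair : ({QuaternionGroup.a i, QuaternionGroup.xa j} : Set (QuaternionGroup n))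
        = {QuaternionGroup.xa j, QuaternionGroup.a i} := Set.pair_comm _ _
    rw [hpair] at hgen
    have hgcd := QG.gcd_eq_one hn j i hgen
    have hord := QG.orderOf_a_of_coprime hn i hgcd
    rw [QuaternionGroup.a_mul_xa, QuaternionGroup.orderOf_xa, QuaternionGroup.orderOf_xa]
    rcases hord with h | h <;> rw [h] <;> [left; right] <;> exact QG.multiset_rot _ 4
  · -- a = xa i, b = a j
    have hgcd := QG.gcd_eq_one hn i j hgen
    have hord := QG.orderOf_a_of_coprime hn j hgcd
    rw [QuaternionGroup.xa_mul_a, QuaternionGroup.orderOf_xa, QuaternionGroup.orderOf_xa]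
    rcases hord with h | h <;> rw [h] <;> [left; right] <;> exact QG.multiset_mid _ 4
  · -- both `xa _`
    have hgcd := QG.gcd_eq_one' hn i j hgen
    have hord := QG.orderOf_a_of_coprime hn _ hgcd
    rw [QuaternionGroup.xa_mul_xa, QuaternionGroup.orderOf_xa, QuaternionGroup.orderOf_xa]
    rcases hord with h | h <;> rw [h] <;> [left; right] <;> rfl
end

section
/- Let n ≥ 2. If (a,b) and (a',b') are two generating pairs of the dicyclic group G_n of order 4n with orderOf a = orderOf b = orderOf a' = orderOf b' = 4 and orderOf (a*b) = orderOf (a'*b') = 2n, then there exists a group automorphism φ of G_n with φ(a) = a' and φ(b) = b'. -/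
private lemma qg_unit_mul_n {n : ℕ} (hn : 1 ≤ n) (k : ZMod (2 * n)) (hk : IsUnit k) :
    k * (n : ZMod (2 * n)) = n := by
  have hNZ : NeZero (2 * n) := ⟨by omega⟩
  have hcop : Nat.Coprime k.val (2 * n) := by
    rw [← ZMod.isUnit_iff_coprime]
    rwa [ZMod.natCast_zmod_val]
  have hodd : k.val % 2 = 1 := by
    rcases Nat.mod_two_eq_zero_or_one k.val with h | h
    · exfalso
      have h2 : 2 ∣ Nat.gcd k.val (2 * n) := Nat.dvd_gcd (Nat.dvd_of_mod_eq_zero h) ⟨n, rfl⟩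
      have := hcop
      unfold Nat.Coprime at this
      omega
    · exact h
  calc k * (n : ZMod (2 * n)) = ((k.val : ℕ) : ZMod (2 * n)) * n := by
        rw [ZMod.natCast_zmod_val]
    _ = ((2 * (k.val / 2) + 1 : ℕ) : ZMod (2 * n)) * n := by
        congr 1; congr 1; omega
    _ = ((k.val / 2 : ℕ) : ZMod (2 * n)) * ((2 * n : ℕ) : ZMod (2 * n)) + n := by
        push_cast; ring
    _ = n := by rw [ZMod.natCast_self]; ring

/-- The homomorphism `a i ↦ a (k i)`, `xa i ↦ xa (m + k i)`. -/
private def psiHom {n : ℕ} (k m : ZMod (2 * n)) (hk : k * (n : ZMod (2 * n)) = n) :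
    QuaternionGroup n →* QuaternionGroup n where
  toFun x := match x with
    | .a i => QuaternionGroup.a (k * i)
    | .xa i => QuaternionGroup.xa (m + k * i)
  map_one' := by
    show QuaternionGroup.a _ = 1
    rw [QuaternionGroup.one_def, mul_zero]
  map_mul' := by
    rintro (i | i) (j | j)
    · show QuaternionGroup.a _ = QuaternionGroup.a _ * QuaternionGroup.a _
      rw [QuaternionGroup.a_mul_a]; congr 1; ring
    · show QuaternionGroup.xa _ = QuaternionGroup.a _ * QuaternionGroup.xa _
      rw [QuaternionGroup.a_mul_xa]; congr 1; ring
    · show QuaternionGroup.xa _ = QuaternionGroup.xa _ * QuaternionGroup.a _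
      rw [QuaternionGroup.xa_mul_a]; congr 1; ring
    · show QuaternionGroup.a _ = QuaternionGroup.xa _ * QuaternionGroup.xa _
      rw [QuaternionGroup.xa_mul_xa]; congr 1; linear_combination hk

/-- The automorphism `a i ↦ a (k i)`, `xa i ↦ xa (m + k i)` for `k` invertible. -/
private def psiAut {n : ℕ} (k k' m : ZMod (2 * n)) (hk : k * (n : ZMod (2 * n)) = n)
    (hk' : k' * (n : ZMod (2 * n)) = n) (hkk' : k * k' = 1) :
    MulAut (QuaternionGroup n) :=
  MonoidHom.toMulEquiv (psiHom k m hk) (psiHom k' (-(k' * m)) hk')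
    (by
      ext x
      rcases x with i | i
      · show QuaternionGroup.a _ = QuaternionGroup.a _
        congr 1; linear_combination i * mul_comm k k' + i * hkk'
      · show QuaternionGroup.xa _ = QuaternionGroup.xa _
        congr 1; linear_combination i * mul_comm k k' + i * hkk')
    (by
      ext x
      rcases x with i | i
      · show QuaternionGroup.a _ = QuaternionGroup.a _
        congr 1; linear_combination i * hkk'
      · show QuaternionGroup.xa _ = QuaternionGroup.xa _
        congr 1; linear_combination (i - m) * hkk')

private lemma psiAut_apply_xa {n : ℕ} (k k' m : ZMod (2 * n)) (hk hk' hkk') (i : ZMod (2 * n)) :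
    psiAut k k' m hk hk' hkk' (QuaternionGroup.xa i) = QuaternionGroup.xa (m + k * i) := rfl

/-- Main case: two pairs of `xa`-type elements whose products have order `2n`. -/
private lemma qg_main' {n : ℕ} (hn : 2 ≤ n) (i j i' j' : ZMod (2 * n))
    (hab : orderOf (QuaternionGroup.xa i * QuaternionGroup.xa j) = 2 * n)
    (hab' : orderOf (QuaternionGroup.xa i' * QuaternionGroup.xa j') = 2 * n) :
    ∃ φ : MulAut (QuaternionGroup n),
      φ (QuaternionGroup.xa i) = QuaternionGroup.xa i' ∧
      φ (QuaternionGroup.xa j) = QuaternionGroup.xa j' := by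
  have hNZ : NeZero n := ⟨by omega⟩
  rw [QuaternionGroup.xa_mul_xa, QuaternionGroup.orderOf_a] at hab hab'
  set t : ZMod (2 * n) := (n : ZMod (2 * n)) + j - i with htdef
  set t' : ZMod (2 * n) := (n : ZMod (2 * n)) + j' - i' with ht'def
  have hgcd : Nat.gcd (2 * n) t.val = 1 :=
    (Nat.div_eq_self.mp hab).resolve_left (by omega)
  have hgcd' : Nat.gcd (2 * n) t'.val = 1 :=
    (Nat.div_eq_self.mp hab').resolve_left (by omega)
  have hNZ2 : NeZero (2 * n) := ⟨by omega⟩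
  have ht : IsUnit t := by
    rw [← ZMod.natCast_zmod_val t, ZMod.isUnit_iff_coprime]
    exact Nat.coprime_comm.mp hgcd
  have ht' : IsUnit t' := by
    rw [← ZMod.natCast_zmod_val t', ZMod.isUnit_iff_coprime]
    exact Nat.coprime_comm.mp hgcd'
  set k : ZMod (2 * n) := t' * ↑ht.unit⁻¹ with hkdef
  set k' : ZMod (2 * n) := t * ↑ht'.unit⁻¹ with hk'def
  have hku : IsUnit k := ht'.mul (Units.isUnit _)
  have hk'u : IsUnit k' := ht.mul (Units.isUnit _)
  have hkk' : k * k' = 1 := by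
    have h1 : (↑ht.unit⁻¹ : ZMod (2 * n)) * t = 1 := ht.val_inv_mul
    have h2 : (↑ht'.unit⁻¹ : ZMod (2 * n)) * t' = 1 := ht'.val_inv_mul
    calc k * k' = ((↑ht.unit⁻¹ : ZMod (2 * n)) * t) * ((↑ht'.unit⁻¹ : ZMod (2 * n)) * t') := by
          ring
      _ = 1 := by rw [h1, h2, one_mul]
  have hkt : k * t = t' := by
    have h1 : (↑ht.unit⁻¹ : ZMod (2 * n)) * t = 1 := ht.val_inv_mul
    calc k * t = t' * ((↑ht.unit⁻¹ : ZMod (2 * n)) * t) := by ring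
      _ = t' := by rw [h1, mul_one]
  have hk : k * (n : ZMod (2 * n)) = n := qg_unit_mul_n (by omega) k hku
  have hk' : k' * (n : ZMod (2 * n)) = n := qg_unit_mul_n (by omega) k' hk'u
  refine ⟨psiAut k k' (i' - k * i) hk hk' hkk', ?_, ?_⟩
  · rw [psiAut_apply_xa]; congr 1; ring
  · rw [psiAut_apply_xa]; congr 1
    have : k * t = t' := hkt
    rw [htdef, ht'def] at this
    linear_combination this - hk

/-- Explicit extra automorphism of the quaternion group `Q₈`, swapping `i` and `j`. -/
private def sigmaFun : QuaternionGroup 2 → QuaternionGroup 2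
  | .a i => if i = 1 then .xa 0 else if i = 3 then .xa 2 else .a i
  | .xa i => if i = 0 then .a 1 else if i = 2 then .a 3 else .xa (-i)

private def sigmaAut : MulAut (QuaternionGroup 2) where
  toFun := sigmaFun
  invFun := sigmaFun
  left_inv := by decide
  right_inv := by decide
  map_mul' := by decide

private def shiftAut : MulAut (QuaternionGroup 2) :=
  psiAut 1 1 1 (by norm_num) (by norm_num) (by norm_num)

/-- Subgroup of rotations. -/
private def rotSubgroup (n : ℕ) : Subgroup (QuaternionGroup n) where
  carrier := Set.range QuaternionGroup.a
  mul_mem' := by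
    rintro _ _ ⟨x, rfl⟩ ⟨y, rfl⟩
    exact ⟨x + y, (QuaternionGroup.a_mul_a x y).symm⟩
  one_mem' := ⟨0, QuaternionGroup.one_def.symm⟩
  inv_mem' := by
    rintro _ ⟨x, rfl⟩
    exact ⟨-x, rfl⟩

/-- Normalization: any valid generating pair can be moved to a pair of `xa`-type elements. -/
private lemma qg_norm {n : ℕ} (hn : 2 ≤ n) (a b : QuaternionGroup n)
    (hgen : Subgroup.closure ({a, b} : Set (QuaternionGroup n)) = ⊤)
    (ha : orderOf a = 4) (hb : orderOf b = 4) (hab : orderOf (a * b) = 2 * n) :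
    ∃ ρ : MulAut (QuaternionGroup n),
      (∃ i, ρ a = QuaternionGroup.xa i) ∧ (∃ j, ρ b = QuaternionGroup.xa j) := by
  have hNZ : NeZero n := ⟨by omega⟩
  rcases a with i | i <;> rcases b with j | j
  · exfalso
    have hA : Subgroup.closure ({QuaternionGroup.a i, QuaternionGroup.a j} :
        Set (QuaternionGroup n)) ≤ rotSubgroup n := by
      rw [Subgroup.closure_le]
      rintro x (rfl | rfl)
      · exact ⟨i, rfl⟩
      · exact ⟨j, rfl⟩
    have hx : QuaternionGroup.xa 0 ∈ rotSubgroup n := hA (hgen ▸ Subgroup.mem_top _)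
    obtain ⟨x, hx⟩ := hx
    cases hx
  · -- a = a i, b = xa j
    have hn2 : n = 2 := by
      rw [QuaternionGroup.a_mul_xa, QuaternionGroup.orderOf_xa] at hab
      omega
    subst hn2
    have hi : i + i ≠ 0 := by
      intro h
      have h4 : (QuaternionGroup.a i) ^ 2 = 1 := by
        rw [sq, QuaternionGroup.a_mul_a, h, QuaternionGroup.one_def]
      have := orderOf_dvd_of_pow_eq_one h4
      rw [ha] at this
      norm_num at this
    fin_cases i <;> fin_cases j <;>
      first
        | (exact absurd (by decide) hi)
        | (exact ⟨sigmaAut, by decide, by decide⟩)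
        | (exact ⟨sigmaAut * shiftAut, by decide, by decide⟩)
  · -- a = xa i, b = a j
    have hn2 : n = 2 := by
      rw [QuaternionGroup.xa_mul_a, QuaternionGroup.orderOf_xa] at hab
      omega
    subst hn2
    have hj : j + j ≠ 0 := by
      intro h
      have h4 : (QuaternionGroup.a j) ^ 2 = 1 := by
        rw [sq, QuaternionGroup.a_mul_a, h, QuaternionGroup.one_def]
      have := orderOf_dvd_of_pow_eq_one h4
      rw [hb] at this
      norm_num at this
    fin_cases i <;> fin_cases j <;>
      first
        | (exact absurd (by decide) hj)
        | (exact ⟨sigmaAut, by decide, by decide⟩)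
        | (exact ⟨sigmaAut * shiftAut, by decide, by decide⟩)
  · exact ⟨1, ⟨i, rfl⟩, ⟨j, rfl⟩⟩

/-- For `n ≥ 2`, any two generating pairs of the dicyclic group `G_n`
(Mathlib's `QuaternionGroup n`) with orders `(4, 4)` and product of order `2n`
are related by a group automorphism of `G_n`. -/
theorem dicyclic_generating_pairs_equivalent_signature_2n (n : ℕ) (hn : 2 ≤ n)
    (a b a' b' : QuaternionGroup n)
    (hgen : Subgroup.closure ({a, b} : Set (QuaternionGroup n)) = ⊤)
    (hgen' : Subgroup.closure ({a', b'} : Set (QuaternionGroup n)) = ⊤)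
    (ha : orderOf a = 4) (hb : orderOf b = 4)
    (ha' : orderOf a' = 4) (hb' : orderOf b' = 4)
    (hab : orderOf (a * b) = 2 * n) (hab' : orderOf (a' * b') = 2 * n) :
    ∃ φ : MulAut (QuaternionGroup n), φ a = a' ∧ φ b = b' := by
  obtain ⟨ρ, ⟨i, hi⟩, ⟨j, hj⟩⟩ := qg_norm hn a b hgen ha hb hab
  obtain ⟨ρ', ⟨i', hi'⟩, ⟨j', hj'⟩⟩ := qg_norm hn a' b' hgen' ha' hb' hab'
  have h1 : orderOf (QuaternionGroup.xa i * QuaternionGroup.xa j) = 2 * n := by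
    rw [← hi, ← hj, ← map_mul]
    exact (orderOf_injective ρ.toMonoidHom ρ.injective (a * b)).trans hab
  have h2 : orderOf (QuaternionGroup.xa i' * QuaternionGroup.xa j') = 2 * n := by
    rw [← hi', ← hj', ← map_mul]
    exact (orderOf_injective ρ'.toMonoidHom ρ'.injective (a' * b')).trans hab'
  obtain ⟨φ₀, hφa, hφb⟩ := qg_main' hn i j i' j' h1 h2
  refine ⟨ρ'⁻¹ * (φ₀ * ρ), ?_, ?_⟩
  · show ρ'⁻¹ ((φ₀ * ρ) a) = a'
    show ρ'⁻¹ (φ₀ (ρ a)) = a'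
    rw [hi, hφa, ← hi']
    exact ρ'.symm_apply_apply a'
  · show ρ'⁻¹ ((φ₀ * ρ) b) = b'
    show ρ'⁻¹ (φ₀ (ρ b)) = b'
    rw [hj, hφb, ← hj']
    exact ρ'.symm_apply_apply b'
end
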